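/- If subspaces V_1, ..., V_n of a finite-dimensional vector space V generate a distributive lattice (under sum and intersection), then there exists a basis B of V such that each V_i is spanned by a subset of B. -/

import Mathlib

set_option maxHeartbeats 1000000
open Submodule Set


/-- Membership in the sublattice generated by a set of elements of a lattice. -/
inductive MemLatGen {α : Type*} [Lattice α] (S : Set α) : α → Prop
  | base {a : α} : a ∈ S → MemLatGen S a
  | sup {a b : α} : MemLatGen S a → MemLatGen S b → MemLatGen S (a ⊔ b)
  | inf {a b : α} : MemLatGen S a → MemLatGen S b → MemLatGen S (a ⊓ b)

/-- A family of elements of a lattice generates a distributive lattice. -/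
def IsDistribFamily {α : Type*} [Lattice α] (S : Set α) : Prop :=
  ∀ a b c : α, MemLatGen S a → MemLatGen S b → MemLatGen S c →
    a ⊓ (b ⊔ c) = (a ⊓ b) ⊔ (a ⊓ c)



theorem exists_compl_set {k V : Type*} [Field k] [AddCommGroup V] [Module k V]
    (p q : Submodule k V) (hpq : p ≤ q) :
    ∃ s : Set V, s ⊆ (q : Set V) ∧ LinearIndependent k ((↑) : s → V) ∧
      Disjoint (Submodule.span k s) p ∧ p ⊔ Submodule.span k s = q := by
  obtain ⟨b, hbp, hbspan, hbind⟩ := exists_linearIndependent k (p : Set V)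
  have hbspan' : Submodule.span k b = p := by simpa using hbspan
  obtain ⟨b', hb't, hbb', hspanb', hindb'⟩ :=
    (exists_linearIndepOn_id_extension hbind (hbp.trans hpq) : ∃ b' ⊆ (q : Set V), b ⊆ b' ∧
      (q : Set V) ⊆ Submodule.span k b' ∧ LinearIndependent k ((↑) : b' → V))
  have hq : Submodule.span k b' = q :=
    le_antisymm (Submodule.span_le.2 hb't) hspanb'
  refine ⟨b' \ b, (Set.diff_subset).trans hb't, hindb'.mono Set.diff_subset, ?_, ?_⟩
  · rw [← hbspan']
    have := hindb'.disjoint_span_image (s := ((↑) ⁻¹' (b' \ b) : Set b'))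
      (t := ((↑) ⁻¹' b : Set b'))
      (by rw [Set.disjoint_iff]; rintro x ⟨hx1, hx2⟩; exact hx1.2 hx2)
    simpa [Set.image_preimage_eq_inter_range, Subtype.range_coe,
      Set.inter_eq_self_of_subset_left (Set.diff_subset),
      Set.inter_eq_self_of_subset_left hbb'] using this
  · rw [← hbspan', ← Submodule.span_union, Set.union_diff_cancel hbb', hq]


section BotTop

variable {α : Type*} [Lattice α] [BoundedOrder α] {S : Set α}

theorem memLatGen_bot_top {x : α} (hx : MemLatGen (insert ⊥ (insert ⊤ S)) x) :
    x = ⊥ ∨ x = ⊤ ∨ MemLatGen S x := by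
  induction hx with
  | base h =>
    rcases h with rfl | h
    · exact Or.inl rfl
    rcases h with rfl | h
    · exact Or.inr (Or.inl rfl)
    · exact Or.inr (Or.inr (.base h))
  | sup ha hb iha ihb =>
    rcases iha with rfl | rfl | ha' <;> rcases ihb with rfl | rfl | hb' <;>
      first
        | exact Or.inr (Or.inr (MemLatGen.sup ha' hb'))
        | simp [*]
  | inf ha hb iha ihb =>
    rcases iha with rfl | rfl | ha' <;> rcases ihb with rfl | rfl | hb' <;>
      first
        | exact Or.inr (Or.inr (MemLatGen.inf ha' hb'))
        | simp [*]

theorem isDistribFamily_bot_top (h : IsDistribFamily S) :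
    IsDistribFamily (insert ⊥ (insert ⊤ S)) := by
  intro a b c ha hb hc
  rcases memLatGen_bot_top ha with rfl | rfl | ha' <;>
  rcases memLatGen_bot_top hb with rfl | rfl | hb' <;>
  rcases memLatGen_bot_top hc with rfl | rfl | hc' <;>
    first
      | simp
      | exact h _ _ _ ha' hb' hc'

theorem memLatGen_finsetSup {ι : Type*} (hbot : (⊥ : α) ∈ S) (t : Finset ι) (f : ι → α)
    (hf : ∀ i ∈ t, MemLatGen S (f i)) : MemLatGen S (t.sup f) := by
  classical
  induction t using Finset.induction_on with
  | empty => simpa using MemLatGen.base hbot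
  | @insert a t _ ih =>
    rw [Finset.sup_insert]
    exact .sup (hf _ (Finset.mem_insert_self _ _))
      (ih fun i hi => hf i (Finset.mem_insert_of_mem hi))

theorem memLatGen_finsetInf {ι : Type*} (htop : (⊤ : α) ∈ S) (t : Finset ι) (f : ι → α)
    (hf : ∀ i ∈ t, MemLatGen S (f i)) : MemLatGen S (t.inf f) := by
  classical
  induction t using Finset.induction_on with
  | empty => simpa using MemLatGen.base htop
  | @insert a t _ ih =>
    rw [Finset.inf_insert]
    exact .inf (hf _ (Finset.mem_insert_self _ _))
      (ih fun i hi => hf i (Finset.mem_insert_of_mem hi))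

theorem memLatGen_inf_finsetSup {ι : Type*} (h : IsDistribFamily S) (hbot : (⊥ : α) ∈ S)
    {a : α} (ha : MemLatGen S a) (t : Finset ι) (f : ι → α)
    (hf : ∀ i ∈ t, MemLatGen S (f i)) : a ⊓ t.sup f = t.sup fun i => a ⊓ f i := by
  classical
  induction t using Finset.induction_on with
  | empty => simp
  | @insert b t _ ih =>
    rw [Finset.sup_insert, Finset.sup_insert,
      h a (f b) (t.sup f) ha (hf _ (Finset.mem_insert_self _ _))
        (memLatGen_finsetSup hbot t f fun i hi => hf i (Finset.mem_insert_of_mem hi)),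
      ih fun i hi => hf i (Finset.mem_insert_of_mem hi)]

end BotTop

theorem adapted_of_finset {k V : Type*} [Field k] [AddCommGroup V] [Module k V]
    [FiniteDimensional k V]
    (L : Finset (Submodule k V)) (hbot : ⊥ ∈ L) (htop : ⊤ ∈ L)
    (hsupc : ∀ a ∈ L, ∀ b ∈ L, a ⊔ b ∈ L) (hinfc : ∀ a ∈ L, ∀ b ∈ L, a ⊓ b ∈ L)
    (hdist : ∀ a ∈ L, ∀ b ∈ L, ∀ c ∈ L, a ⊓ (b ⊔ c) = (a ⊓ b) ⊔ (a ⊓ c)) :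
    ∃ B : Set V, LinearIndependent k ((↑) : B → V) ∧ Submodule.span k B = ⊤ ∧
      ∀ X ∈ L, ∃ s ⊆ B, X = Submodule.span k s := by
  classical
  -- finite sups of members are members
  have hsupF : ∀ t : Finset (Submodule k V), (∀ x ∈ t, x ∈ L) → t.sup id ∈ L := by
    intro t
    induction t using Finset.induction_on with
    | empty => intro _; simpa using hbot
    | @insert a t _ ih =>
      intro hmem
      rw [Finset.sup_insert]
      exact hsupc _ (hmem _ (Finset.mem_insert_self _ _)) _
        (ih fun x hx => hmem x (Finset.mem_insert_of_mem hx))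
  -- distributivity over finite sups
  have hdistF : ∀ a ∈ L, ∀ t : Finset (Submodule k V), (∀ x ∈ t, x ∈ L) →
      a ⊓ t.sup id = t.sup (fun b => a ⊓ b) := by
    intro a ha t
    induction t using Finset.induction_on with
    | empty => intro _; simp
    | @insert b t _ ih =>
      intro hmem
      rw [Finset.sup_insert, Finset.sup_insert, id_eq,
        hdist a ha b (hmem _ (Finset.mem_insert_self _ _)) (t.sup id)
          (hsupF t fun x hx => hmem x (Finset.mem_insert_of_mem hx)),
        ih fun x hx => hmem x (Finset.mem_insert_of_mem hx)]
  -- join irreducible elements of L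
  set Irr : Finset (Submodule k V) :=
    L.filter (fun J => J ≠ ⊥ ∧ ∀ a ∈ L, ∀ b ∈ L, J = a ⊔ b → J = a ∨ J = b) with hIrr
  set Jm : Submodule k V → Submodule k V := fun J => (L.filter (· < J)).sup id with hJmdef
  have hJm_mem : ∀ J, Jm J ∈ L := fun J =>
    hsupF _ (fun x hx => (Finset.mem_filter.1 hx).1)
  have hJm_le : ∀ J, Jm J ≤ J := fun J =>
    Finset.sup_le fun x hx => le_of_lt (Finset.mem_filter.1 hx).2
  have hle_Jm : ∀ J, ∀ a ∈ L, a < J → a ≤ Jm J := fun J a ha haJ =>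
    Finset.le_sup (f := id) (Finset.mem_filter.2 ⟨ha, haJ⟩)
  -- choose complements
  choose sC hsub hind hdis hspan using fun J : Submodule k V =>
    exists_compl_set (Jm J) J (hJm_le J)
  -- a sup of members equal to an irreducible must contain it
  have supIrr : ∀ t : Finset (Submodule k V), (∀ x ∈ t, x ∈ L) →
      ∀ J ∈ Irr, t.sup id = J → ∃ a ∈ t, a = J := by
    intro t
    induction t using Finset.induction_on with
    | empty =>
      intro _ J hJ hsup
      exact absurd hsup.symm (Finset.mem_filter.1 hJ).2.1
    | @insert b t _ ih =>
      intro hmem J hJ hsup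
      obtain ⟨hJL, hJne, hJirr⟩ :
          J ∈ L ∧ J ≠ ⊥ ∧ ∀ a ∈ L, ∀ b ∈ L, J = a ⊔ b → J = a ∨ J = b := by
        have := Finset.mem_filter.1 hJ; exact ⟨this.1, this.2.1, this.2.2⟩
      rw [Finset.sup_insert] at hsup
      rcases hJirr b (hmem _ (Finset.mem_insert_self _ _)) (t.sup id)
          (hsupF t fun x hx => hmem x (Finset.mem_insert_of_mem hx)) hsup.symm with hc | hc
      · exact ⟨b, Finset.mem_insert_self _ _, hc.symm⟩
      · obtain ⟨a, hat, ha⟩ := ih (fun x hx => hmem x (Finset.mem_insert_of_mem hx)) J hJ hc.symm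
        exact ⟨a, Finset.mem_insert_of_mem hat, ha⟩
  have hJmlt : ∀ J ∈ Irr, Jm J < J := by
    intro J hJ
    refine (hJm_le J).lt_of_ne fun he => ?_
    obtain ⟨a, haf, rfl⟩ :=
      supIrr (L.filter (· < J)) (fun x hx => (Finset.mem_filter.1 hx).1) J hJ he
    exact absurd (Finset.mem_filter.1 haf).2 (lt_irrefl _)
  -- the union of complements below X
  set U : Submodule k V → Set V := fun X => ⋃ J ∈ Irr.filter (· ≤ X), sC J with hU
  have hUle : ∀ X, Submodule.span k (U X) ≤ X := by
    intro X
    refine Submodule.span_le.2 (Set.iUnion₂_subset fun J hJ x hx => ?_)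
    exact (Finset.mem_filter.1 hJ).2 (hsub J hx)
  have hUmono : ∀ X Y : Submodule k V, X ≤ Y → U X ⊆ U Y := by
    intro X Y hXY
    refine Set.iUnion₂_subset fun J hJ => ?_
    have hJ' : J ∈ Irr.filter (· ≤ Y) :=
      Finset.mem_filter.2 ⟨(Finset.mem_filter.1 hJ).1, ((Finset.mem_filter.1 hJ).2).trans hXY⟩
    exact Set.subset_iUnion₂ (s := fun J _ => (sC J : Set V)) J hJ'
  have key : ∀ m : ℕ, ∀ X ∈ L, Module.finrank k X = m → X ≤ Submodule.span k (U X) := by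
    intro m
    induction m using Nat.strong_induction_on with
    | _ m ih =>
      intro X hX hrank
      by_cases hXbot : X = ⊥
      · simp [hXbot]
      by_cases hXirr : X ∈ Irr
      · have h1 : Jm X < X := hJmlt X hXirr
        have h2 : Jm X ≤ Submodule.span k (U X) := by
          have hr : Module.finrank k (Jm X) < m :=
            hrank ▸ Submodule.finrank_lt_finrank_of_lt h1
          exact (ih _ hr (Jm X) (hJm_mem X) rfl).trans
            (Submodule.span_mono (hUmono _ _ (hJm_le X)))
        have h3 : Submodule.span k (sC X) ≤ Submodule.span k (U X) := by
          refine Submodule.span_mono fun x hx => ?_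
          rw [hU]
          exact Set.mem_biUnion (Finset.mem_filter.2 ⟨hXirr, le_refl X⟩) hx
        calc X = Jm X ⊔ Submodule.span k (sC X) := (hspan X).symm
          _ ≤ Submodule.span k (U X) := sup_le h2 h3
      · -- X is not irreducible: it is a proper join
        have hX' : ¬ (X ≠ ⊥ ∧ ∀ a ∈ L, ∀ b ∈ L, X = a ⊔ b → X = a ∨ X = b) := by
          intro hc; exact hXirr (Finset.mem_filter.2 ⟨hX, hc⟩)
        push_neg at hX'
        obtain ⟨a, haL, b, hbL, hXab, hXa, hXb⟩ := hX' hXbot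
        have halt : a < X := lt_of_le_of_ne (hXab ▸ le_sup_left) (Ne.symm hXa)
        have hblt : b < X := lt_of_le_of_ne (hXab ▸ le_sup_right) (Ne.symm hXb)
        have h2 : a ≤ Submodule.span k (U X) :=
          (ih _ (hrank ▸ Submodule.finrank_lt_finrank_of_lt halt) a haL rfl).trans
            (Submodule.span_mono (hUmono _ _ halt.le))
        have h3 : b ≤ Submodule.span k (U X) :=
          (ih _ (hrank ▸ Submodule.finrank_lt_finrank_of_lt hblt) b hbL rfl).trans
            (Submodule.span_mono (hUmono _ _ hblt.le))
        exact le_trans (le_of_eq hXab) (sup_le h2 h3)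
  have hspanX : ∀ X ∈ L, Submodule.span k (U X) = X := fun X hX =>
    le_antisymm (hUle X) (key (Module.finrank k X) X hX rfl)
  -- linear independence of unions of complements
  have hindT : ∀ t : Finset (Submodule k V), t ⊆ Irr →
      LinearIndependent k ((↑) : (⋃ J ∈ t, (sC J : Set V)) → V) := by
    intro t
    induction t using Finset.strongInduction with
    | _ t ih =>
      intro ht
      rcases t.eq_empty_or_nonempty with rfl | hne
      · have he : (⋃ J ∈ (∅ : Finset (Submodule k V)), (sC J : Set V)) = (∅ : Set V) := by
          simp
        rw [he]
        exact linearIndependent_empty k V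
      obtain ⟨J₀, hJ₀t, hmax⟩ := t.exists_maximal hne
      have hJ₀L : J₀ ∈ L := (Finset.mem_filter.1 (ht hJ₀t)).1
      have hsplit : (⋃ J ∈ t, (sC J : Set V)) = sC J₀ ∪ ⋃ J ∈ t.erase J₀, sC J := by
        conv_lhs => rw [← Finset.insert_erase hJ₀t]
        simp [Finset.set_biUnion_insert]
      rw [hsplit]
      have hrest : ∀ x ∈ t.erase J₀, x ∈ L :=
        fun x hx => (Finset.mem_filter.1 (ht (Finset.mem_of_mem_erase hx))).1
      refine LinearIndepOn.id_union (hind J₀)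
        (ih (t.erase J₀) (Finset.erase_ssubset hJ₀t) ((Finset.erase_subset _ _).trans ht)) ?_
      have hY : Submodule.span k (⋃ J ∈ t.erase J₀, (sC J : Set V)) ≤ (t.erase J₀).sup id := by
        refine Submodule.span_le.2 (Set.iUnion₂_subset fun J hJ x hx => ?_)
        exact Finset.le_sup (f := id) hJ (hsub J hx)
      have hdisj : J₀ ⊓ (t.erase J₀).sup id ≤ Jm J₀ := by
        rw [hdistF J₀ hJ₀L _ hrest]
        refine Finset.sup_le fun b hb => ?_
        have hbL : b ∈ L := hrest b hb
        have hlt : J₀ ⊓ b < J₀ := by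
          refine lt_of_le_of_ne inf_le_left fun he => ?_
          have hle : J₀ ≤ b := by rw [← he]; exact inf_le_right
          rcases hle.lt_or_eq with hc | hc
          · exact not_le_of_gt hc (hmax (Finset.mem_of_mem_erase hb) hc.le)
          · exact (Finset.ne_of_mem_erase hb) hc.symm
        exact hle_Jm J₀ _ (hinfc _ hJ₀L _ hbL) hlt
      refine Submodule.disjoint_def.2 fun x hx1 hx2 => ?_
      have hxJ₀ : x ∈ J₀ := Submodule.span_le.2 (hsub J₀) hx1
      have hxJm : x ∈ Jm J₀ := hdisj ⟨hxJ₀, hY hx2⟩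
      exact Submodule.disjoint_def.1 (hdis J₀) x hx1 hxJm
  refine ⟨⋃ J ∈ Irr, (sC J : Set V), hindT Irr (subset_refl _), ?_, ?_⟩
  · have h1 := hspanX ⊤ htop
    have h2 : U ⊤ = ⋃ J ∈ Irr, (sC J : Set V) := by
      simp only [hU]
      rw [Finset.filter_true_of_mem fun _ _ => le_top]
    rwa [h2] at h1
  · intro X hX
    refine ⟨U X, ?_, (hspanX X hX).symm⟩
    exact Set.iUnion₂_subset fun J hJ =>
      Set.subset_iUnion₂ (s := fun J _ => (sC J : Set V)) J (Finset.mem_of_mem_filter J hJ)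

/-- If subspaces `V₁, …, Vₙ` of a finite-dimensional vector space `V` generate a
distributive lattice, then there is a basis `B` of `V` such that each `Vᵢ` is
spanned by a subset of `B`. -/
theorem exists_adapted_basis_of_distributive
    {k V : Type*} [Field k] [AddCommGroup V] [Module k V] [FiniteDimensional k V]
    (n : ℕ) (Vs : Fin n → Submodule k V)
    (h : IsDistribFamily (Set.range Vs)) :
    ∃ B : Set V, LinearIndependent k ((↑) : B → V) ∧ Submodule.span k B = ⊤ ∧
      ∀ i : Fin n, ∃ s ⊆ B, Vs i = Submodule.span k s := by
  classical
  have h' : IsDistribFamily (insert ⊥ (insert ⊤ (Set.range Vs))) := isDistribFamily_bot_top h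
  have hbot' : (⊥ : Submodule k V) ∈ insert ⊥ (insert ⊤ (Set.range Vs)) := Set.mem_insert _ _
  have hMgen : ∀ F : Finset (Fin n),
      MemLatGen (insert ⊥ (insert ⊤ (Set.range Vs))) (F.inf Vs) :=
    fun F => memLatGen_finsetInf (Set.mem_insert_of_mem _ (Set.mem_insert _ _)) F Vs
      fun i _ => .base (Set.mem_insert_of_mem _ (Set.mem_insert_of_mem _ ⟨i, rfl⟩))
  have hDgen : ∀ G : Finset (Finset (Fin n)),
      MemLatGen (insert ⊥ (insert ⊤ (Set.range Vs))) (G.sup fun F => F.inf Vs) :=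
    fun G => memLatGen_finsetSup hbot' G _ fun F _ => hMgen F
  have hLgen : ∀ x ∈ Finset.univ.image
      (fun G : Finset (Finset (Fin n)) => G.sup fun F => F.inf Vs),
      MemLatGen (insert ⊥ (insert ⊤ (Set.range Vs))) x := by
    intro x hx
    obtain ⟨G, -, rfl⟩ := Finset.mem_image.1 hx
    exact hDgen G
  obtain ⟨B, hB1, hB2, hB3⟩ := adapted_of_finset
    (Finset.univ.image fun G : Finset (Finset (Fin n)) => G.sup fun F => F.inf Vs)
    (Finset.mem_image.2 ⟨∅, Finset.mem_univ _, by simp⟩)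
    (Finset.mem_image.2 ⟨{∅}, Finset.mem_univ _, by simp⟩)
    (by
      intro a ha b hb
      obtain ⟨G, -, rfl⟩ := Finset.mem_image.1 ha
      obtain ⟨H, -, rfl⟩ := Finset.mem_image.1 hb
      exact Finset.mem_image.2 ⟨G ∪ H, Finset.mem_univ _, Finset.sup_union⟩)
    (by
      intro a ha b hb
      obtain ⟨G, -, rfl⟩ := Finset.mem_image.1 ha
      obtain ⟨H, -, rfl⟩ := Finset.mem_image.1 hb
      refine Finset.mem_image.2 ⟨(G ×ˢ H).image fun p => p.1 ∪ p.2, Finset.mem_univ _, ?_⟩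
      rw [Finset.sup_image]
      have e1 : (G.sup fun F => F.inf Vs) ⊓ (H.sup fun F => F.inf Vs)
          = H.sup fun F' => (G.sup fun F => F.inf Vs) ⊓ F'.inf Vs :=
        memLatGen_inf_finsetSup h' hbot' (hDgen G) H _ fun F _ => hMgen F
      have e2 : ∀ F' : Finset (Fin n),
          (G.sup fun F => F.inf Vs) ⊓ F'.inf Vs = G.sup fun F => (F ∪ F').inf Vs := by
        intro F'
        rw [inf_comm,
          memLatGen_inf_finsetSup h' hbot' (hMgen F') G _ fun F _ => hMgen F]
        exact Finset.sup_congr rfl fun F _ => by rw [Finset.inf_union, inf_comm]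
      rw [Finset.sup_product_right]
      rw [e1]
      exact (Finset.sup_congr rfl fun F' _ => (e2 F')).symm)
    (fun a ha b hb c hc => h' a b c (hLgen a ha) (hLgen b hb) (hLgen c hc))
  refine ⟨B, hB1, hB2, fun i => hB3 (Vs i) ?_⟩
  exact Finset.mem_image.2 ⟨{{i}}, Finset.mem_univ _, by simp⟩
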